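/- Let f : [0,∞) → ℝ be non-increasing, α ∈ (0,1), and δ > 0. Let 0 < β₀ < β₁ < ⋯ < β_K be real numbers with β_K = −log(α)/δ and (β_{k+1}^{−1} − β_k^{−1})·log(α) ≤ δ for every k < K, and set B := {β₀, β₁, …, β_K}. Then max_{β∈B} (f(β) + β^{−1}·log(α)) ≤ sup_{β>0} (f(β) + β^{−1}·log(α)) ≤ max_{β∈B} (f(β) + β^{−1}·log(α)) + max{f(0) − f(β₀), δ}. -/

import Mathlib

theorem stmt17 (f : ℝ → ℝ) (hf : ∀ x y : ℝ, 0 ≤ x → x ≤ y → f y ≤ f x)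
    (α δ : ℝ) (hα : α ∈ Set.Ioo (0 : ℝ) 1) (hδ : 0 < δ)
    (K : ℕ) (β : Fin (K + 1) → ℝ)
    (hpos : 0 < β 0) (hmono : StrictMono β)
    (hlast : β (Fin.last K) = -Real.log α / δ)
    (hgap : ∀ k : Fin K, ((β k.succ)⁻¹ - (β k.castSucc)⁻¹) * Real.log α ≤ δ) :
    Finset.univ.sup' Finset.univ_nonempty (fun k => f (β k) + (β k)⁻¹ * Real.log α)
        ≤ sSup ((fun b : ℝ => f b + b⁻¹ * Real.log α) '' Set.Ioi 0) ∧
    sSup ((fun b : ℝ => f b + b⁻¹ * Real.log α) '' Set.Ioi 0)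
        ≤ Finset.univ.sup' Finset.univ_nonempty (fun k => f (β k) + (β k)⁻¹ * Real.log α)
          + max (f 0 - f (β 0)) δ := by
  obtain ⟨hα0, hα1⟩ := hα
  have hlog : Real.log α < 0 := Real.log_neg hα0 hα1
  have hβpos : ∀ k, 0 < β k := fun k =>
    lt_of_lt_of_le hpos (hmono.monotone (Fin.zero_le k))
  have hbdd : BddAbove ((fun b : ℝ => f b + b⁻¹ * Real.log α) '' Set.Ioi 0) := by
    refine ⟨f 0, ?_⟩
    rintro _ ⟨b, hb, rfl⟩
    have hb' : (0:ℝ) < b := hb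
    have h1 : b⁻¹ * Real.log α ≤ 0 :=
      mul_nonpos_of_nonneg_of_nonpos (inv_nonneg.2 hb'.le) hlog.le
    have h2 : f b ≤ f 0 := hf 0 b le_rfl hb'.le
    simp only
    linarith
  constructor
  · apply Finset.sup'_le
    intro k _
    exact le_csSup hbdd ⟨β k, hβpos k, rfl⟩
  · set M := Finset.univ.sup' Finset.univ_nonempty
      (fun k => f (β k) + (β k)⁻¹ * Real.log α) with hM
    have hMk : ∀ k, f (β k) + (β k)⁻¹ * Real.log α ≤ M := fun k =>
      Finset.le_sup' (fun k => f (β k) + (β k)⁻¹ * Real.log α) (Finset.mem_univ k)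
    apply csSup_le (Set.Nonempty.image _ ⟨1, Set.mem_Ioi.2 one_pos⟩)
    rintro _ ⟨b, hb, rfl⟩
    have hbpos : (0:ℝ) < b := hb
    simp only
    rcases le_or_gt b (β 0) with h0 | h0
    · -- b ≤ β 0
      have h1 : f b ≤ f 0 := hf 0 b le_rfl hbpos.le
      have h2 : (β 0)⁻¹ ≤ b⁻¹ := by
        apply inv_anti₀ hbpos h0
      have h3 : b⁻¹ * Real.log α ≤ (β 0)⁻¹ * Real.log α :=
        mul_le_mul_of_nonpos_right h2 hlog.le
      have h4 := hMk 0
      have h5 : f 0 - f (β 0) ≤ max (f 0 - f (β 0)) δ := le_max_left _ _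
      linarith
    rcases le_or_gt (β (Fin.last K)) b with hK | hK
    · -- β last ≤ b
      have h1 : f b ≤ f (β (Fin.last K)) := hf (β (Fin.last K)) b (hβpos _).le hK
      have h2 : b⁻¹ * Real.log α ≤ 0 :=
        mul_nonpos_of_nonneg_of_nonpos (inv_nonneg.2 hbpos.le) hlog.le
      have h3 : (β (Fin.last K))⁻¹ * Real.log α = -δ := by
        rw [hlast]
        field_simp
        rw [div_self hlog.ne]
      have h4 := hMk (Fin.last K)
      have h5 : δ ≤ max (f 0 - f (β 0)) δ := le_max_right _ _
      linarith
    · -- β 0 < b < β last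
      have hex : ∃ k : Fin K, β k.castSucc ≤ b ∧ b ≤ β k.succ := by
        set S : Finset (Fin (K + 1)) := Finset.univ.filter (fun k => β k ≤ b) with hS
        have hS0 : (0 : Fin (K+1)) ∈ S := by
          simp [hS, h0.le]
        have hSne : S.Nonempty := ⟨0, hS0⟩
        set k₀ := S.max' hSne with hk₀
        have hk₀S : k₀ ∈ S := S.max'_mem hSne
        have hk₀le : β k₀ ≤ b := by
          have := hk₀S
          simp [hS] at this
          exact this
        have hk₀ne : k₀ ≠ Fin.last K := by
          intro h
          rw [h] at hk₀le
          exact absurd hk₀le (not_le.2 hK)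
        obtain ⟨j, hj⟩ := Fin.exists_castSucc_eq.2 hk₀ne
        refine ⟨j, ?_, ?_⟩
        · rw [hj]; exact hk₀le
        · by_contra hcon
          push_neg at hcon
          have hjS : j.succ ∈ S := by simp [hS, hcon.le]
          have hle : j.succ ≤ k₀ := S.le_max' _ hjS
          have hlt : k₀ < j.succ := by
            exact hj ▸ Fin.castSucc_lt_succ (i := j)
          exact absurd hle (not_le.2 hlt)
      obtain ⟨k, hk1, hk2⟩ := hex
      have h1 : f b ≤ f (β k.castSucc) := hf (β k.castSucc) b (hβpos _).le hk1
      have h2 : (β k.succ)⁻¹ ≤ b⁻¹ := inv_anti₀ hbpos hk2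
      have h3 : b⁻¹ * Real.log α ≤ (β k.succ)⁻¹ * Real.log α :=
        mul_le_mul_of_nonpos_right h2 hlog.le
      have h4 := hgap k
      have h5 := hMk k.castSucc
      have h6 : δ ≤ max (f 0 - f (β 0)) δ := le_max_right _ _
      nlinarith [hk1, hk2]
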